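/- If {π_{U_1}(R),...,π_{U_m}(R)} is any factorization of a finite nonempty relation R, then every factor of R whose factorization schemas overlap two blocks splits: concretely, if U_i ≠ V and U_i ∩ V ≠ ∅ where π_V(R) is a factor of R, then π_{U_i}(R) = π_{U_i \ V}(R) × π_{U_i ∩ V}(R). -/
import Mathlib


open Classical

noncomputable def restrictT {α D : Type*} (V : Set α) (t : α → Option D) : α → Option D :=
  fun a => if a ∈ V then t a else none

def combineT {α D : Type*} (q r : α → Option D) : α → Option D :=
  fun a => (q a).orElse (fun _ => r a)

def prodRel {α D : Type*} (Q R : Set (α → Option D)) : Set (α → Option D) :=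
  Set.image2 combineT Q R

def IsOver {α D : Type*} (U : Set α) (t : α → Option D) : Prop :=
  ∀ a, (t a).isSome ↔ a ∈ U

def IsRelOver {α D : Type*} (U : Set α) (R : Set (α → Option D)) : Prop :=
  R.Finite ∧ ∀ t ∈ R, IsOver U t

noncomputable def projRel {α D : Type*} (V : Set α) (R : Set (α → Option D)) :
    Set (α → Option D) :=
  (restrictT V) '' R

def IsFactor {α D : Type*} (U : Set α) (R : Set (α → Option D))
    (V : Set α) (Q : Set (α → Option D)) : Prop :=
  V.Nonempty ∧ V ⊆ U ∧ IsRelOver V Q ∧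
    ∃ R', IsRelOver (U \ V) R' ∧ R = prodRel Q R'

noncomputable def prodList {α D : Type*} (L : List (Set (α → Option D))) :
    Set (α → Option D) :=
  L.foldr prodRel {fun _ => none}

def IsPrimeRel {α D : Type*} (U : Set α) (Q : Set (α → Option D)) : Prop :=
  IsRelOver U Q ∧ ∀ V P, IsFactor U Q V P → P = Q

def selEq {α D : Type*} (A : α) (v : D) (S : Set (α → Option D)) : Set (α → Option D) :=
  {t ∈ S | t A = some v}

def selNe {α D : Type*} (A : α) (v : D) (S : Set (α → Option D)) : Set (α → Option D) :=
  {t ∈ S | t A ≠ some v}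

theorem stmt_2 {α D : Type*} (U : Set α) (hUfin : U.Finite)
    (R : Set (α → Option D)) (hR : IsRelOver U R) (hRne : R.Nonempty)
    (L : List (Set α)) (hne : ∀ V' ∈ L, V'.Nonempty) (hd : L.Pairwise Disjoint)
    (hcov : ∀ a, a ∈ U ↔ ∃ V' ∈ L, a ∈ V')
    (hfacL : ∀ V' ∈ L, IsFactor U R V' (projRel V' R))
    (hprod : prodList (L.map (fun V' => projRel V' R)) = R)
    (Ui V : Set α) (hUi : Ui ∈ L) (hF : IsFactor U R V (projRel V R))
    (hneq : Ui ≠ V) (hint : (Ui ∩ V).Nonempty) :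
    projRel Ui R = prodRel (projRel (Ui \ V) R) (projRel (Ui ∩ V) R) := by
  obtain ⟨hVne, hVU, hQover, R', hR'over, hReq⟩ := hF
  obtain ⟨hUine, hUiU, -, -⟩ := hfacL Ui hUi
  have key : ∀ s ∈ R, restrictT (U \ V) s ∈ R' := by
    intro s hs
    rw [hReq] at hs
    obtain ⟨q, hq, r, hr, hsr⟩ := hs
    have heq : restrictT (U \ V) s = r := by
      funext a
      by_cases ha : a ∈ U \ V
      · have hqa : q a = none := by
          cases hqa' : q a with
          | none => rfl
          | some v =>
            exact absurd ((hQover.2 q hq a).mp (by simp [hqa'])) ha.2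
        simp [restrictT, ha, ← hsr, combineT, hqa, Option.orElse]
      · have hra : r a = none := by
          cases hra' : r a with
          | none => rfl
          | some v =>
            exact absurd ((hR'over.2 r hr a).mp (by simp [hra'])) ha
        simp [restrictT, ha, hra]
    rw [heq]; exact hr
  ext t
  constructor
  · rintro ⟨s, hs, rfl⟩
    refine ⟨restrictT (Ui \ V) s, ⟨s, hs, rfl⟩, restrictT (Ui ∩ V) s, ⟨s, hs, rfl⟩, ?_⟩
    funext a
    by_cases h1 : a ∈ Ui
    · by_cases h2 : a ∈ V
      · simp [combineT, restrictT, h1, h2, Option.orElse]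
      · cases hsa : s a <;>
          simp [combineT, restrictT, h1, h2, hsa, Option.orElse]
    · simp [combineT, restrictT, h1, Option.orElse]
  · rintro ⟨q, ⟨s1, hs1, rfl⟩, r, ⟨s2, hs2, rfl⟩, rfl⟩
    have hs3R : combineT (restrictT V s2) (restrictT (U \ V) s1) ∈ R := by
      rw [hReq]
      exact ⟨restrictT V s2, ⟨s2, hs2, rfl⟩, restrictT (U \ V) s1, key s1 hs1, rfl⟩
    refine ⟨combineT (restrictT V s2) (restrictT (U \ V) s1), hs3R, ?_⟩
    funext a
    by_cases h1 : a ∈ Ui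
    · by_cases h2 : a ∈ V
      · cases hsa : s2 a <;>
          simp [restrictT, combineT, h1, h2, hUiU h1, hsa, Option.orElse]
      · have hd' : a ∈ U \ V := ⟨hUiU h1, h2⟩
        cases hsa : s1 a <;>
          simp [restrictT, combineT, h1, h2, hd', hsa, Option.orElse]
    · simp [restrictT, combineT, h1, Option.orElse]
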